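/- For real numbers x, y with 0 < x ≤ y < 1, one has ∫₀^{arcosh(1/y)} dt/√(1 − x² cosh² t) ≤ K(√(1 − x²)), with equality if and only if x = y. -/

import Mathlib

noncomputable def arcosh (x : ℝ) : ℝ := Real.log (x + Real.sqrt (x ^ 2 - 1))

lemma arcosh_facts {u : ℝ} (hu : 1 ≤ u) :
    Real.cosh (arcosh u) = u ∧ Real.sinh (arcosh u) = Real.sqrt (u ^ 2 - 1) ∧ 0 ≤ arcosh u := by
  set r := Real.sqrt (u ^ 2 - 1) with hr
  have hr0 : 0 ≤ r := Real.sqrt_nonneg _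
  have hr2 : r ^ 2 = u ^ 2 - 1 := Real.sq_sqrt (by nlinarith)
  have hv1 : 1 ≤ u + r := by linarith
  have hv0 : 0 < u + r := by linarith
  have hexp : Real.exp (arcosh u) = u + r := Real.exp_log hv0
  have hinv : Real.exp (-(arcosh u)) = u - r := by
    rw [Real.exp_neg, hexp]
    rw [inv_eq_iff_eq_inv, eq_comm, inv_eq_iff_eq_inv, eq_comm]
    field_simp
    nlinarith
  refine ⟨?_, ?_, ?_⟩
  · rw [Real.cosh_eq, hexp, hinv]; ring
  · rw [Real.sinh_eq, hexp, hinv]; ring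
  · exact Real.log_nonneg hv1

set_option maxHeartbeats 1000000 in
theorem integral_le_completeEllipticK (x y : ℝ) (hx : 0 < x) (hxy : x ≤ y) (hy : y < 1) :
    (∫ t in (0:ℝ)..arcosh (1 / y), 1 / Real.sqrt (1 - x ^ 2 * Real.cosh t ^ 2)) ≤
      (∫ θ in (0:ℝ)..(Real.pi / 2), 1 / Real.sqrt (1 - (1 - x ^ 2) * Real.sin θ ^ 2)) ∧
    ((∫ t in (0:ℝ)..arcosh (1 / y), 1 / Real.sqrt (1 - x ^ 2 * Real.cosh t ^ 2)) =
      (∫ θ in (0:ℝ)..(Real.pi / 2), 1 / Real.sqrt (1 - (1 - x ^ 2) * Real.sin θ ^ 2)) ↔ x = y) := by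
  have hx1 : x < 1 := lt_of_le_of_lt hxy hy
  have hy0 : 0 < y := lt_of_lt_of_le hx hxy
  set L : ℝ := Real.sqrt (1 - x ^ 2) with hLdef
  have hL0 : 0 < L := Real.sqrt_pos.2 (by nlinarith)
  have hL2 : L ^ 2 = 1 - x ^ 2 := Real.sq_sqrt (by nlinarith)
  set g : ℝ → ℝ := fun θ => 1 / Real.sqrt (1 - (1 - x ^ 2) * Real.sin θ ^ 2) with hgdef
  -- denominator bounds for g
  have hden : ∀ θ : ℝ, x ^ 2 ≤ 1 - (1 - x ^ 2) * Real.sin θ ^ 2 := by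
    intro θ
    nlinarith [Real.sin_sq_le_one θ, sq_nonneg (Real.sin θ)]
  have hsq_pos : ∀ θ : ℝ, 0 < Real.sqrt (1 - (1 - x ^ 2) * Real.sin θ ^ 2) := by
    intro θ
    exact Real.sqrt_pos.2 (lt_of_lt_of_le (by positivity) (hden θ))
  have hg_cont : Continuous g := by
    apply continuous_const.div
    · exact (Real.continuous_sqrt.comp (by continuity))
    · intro θ; exact ne_of_gt (hsq_pos θ)
  have hg_nonneg : ∀ θ : ℝ, 0 ≤ g θ := fun θ => by positivity
  have hg_ge_one : ∀ θ : ℝ, 1 ≤ g θ := by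
    intro θ
    have hle : Real.sqrt (1 - (1 - x ^ 2) * Real.sin θ ^ 2) ≤ 1 :=
      Real.sqrt_le_one.2 (by nlinarith [sq_nonneg (Real.sin θ), sq_nonneg x])
    exact one_le_one_div (hsq_pos θ) hle
  -- the primitive G
  set G : ℝ → ℝ := fun u => ∫ θ in (0:ℝ)..u, g θ with hGdef
  have hG : ∀ u : ℝ, HasDerivAt G (g u) u := by
    intro u
    exact intervalIntegral.integral_hasDerivAt_right (hg_cont.intervalIntegrable _ _)
      (hg_cont.stronglyMeasurableAtFilter _ _) hg_cont.continuousAt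
  have hG_cont : Continuous G := by
    rw [continuous_iff_continuousAt]; exact fun u => (hG u).continuousAt
  -- the substitution f
  set f : ℝ → ℝ := fun t => Real.arcsin (Real.sinh t / Real.cosh t / L) with hfdef
  have hf_cont : Continuous f := by
    apply Real.continuous_arcsin.comp
    exact (Real.continuous_sinh.div Real.continuous_cosh
      (fun t => ne_of_gt (Real.cosh_pos t))).div_const L
  -- key derivative computation
  have key : ∀ t : ℝ, 0 ≤ Real.sinh t / Real.cosh t → Real.sinh t / Real.cosh t < L →
      HasDerivAt (fun t => G (f t)) (1 / Real.sqrt (1 - x ^ 2 * Real.cosh t ^ 2)) t := by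
    intro t hq0 hqL
    have hc := Real.cosh_pos t
    set q : ℝ := Real.sinh t / Real.cosh t / L with hqdef
    have hq0' : 0 ≤ q := div_nonneg hq0 hL0.le
    have hq1 : q < 1 := (div_lt_one hL0).2 hqL
    have hd1 : HasDerivAt (fun t => Real.sinh t / Real.cosh t) (1 / Real.cosh t ^ 2) t := by
      have := (Real.hasDerivAt_sinh t).div (Real.hasDerivAt_cosh t) (ne_of_gt hc)
      refine this.congr_deriv ?_
      rw [div_left_inj' (pow_ne_zero 2 (ne_of_gt hc))]
      nlinarith [Real.cosh_sq_sub_sinh_sq t]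
    have hd2 : HasDerivAt (fun t => Real.sinh t / Real.cosh t / L)
        (1 / Real.cosh t ^ 2 / L) t := hd1.div_const L
    have hd3 : HasDerivAt f (1 / Real.sqrt (1 - q ^ 2) * (1 / Real.cosh t ^ 2 / L)) t := by
      exact (Real.hasDerivAt_arcsin (by linarith) (ne_of_lt hq1)).comp t hd2
    have hd4 : HasDerivAt (fun t => G (f t))
        (g (f t) * (1 / Real.sqrt (1 - q ^ 2) * (1 / Real.cosh t ^ 2 / L))) t :=
      (hG (f t)).comp t hd3
    convert hd4 using 1
    -- now the arithmetic identity
    have hsin : Real.sin (f t) = q := Real.sin_arcsin (by linarith) hq1.le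
    have hq2 : q ^ 2 < 1 := by nlinarith
    set r : ℝ := Real.sqrt (1 - q ^ 2) with hrdef
    have hr0 : 0 < r := Real.sqrt_pos.2 (by linarith)
    have hr2 : r ^ 2 = 1 - q ^ 2 := Real.sq_sqrt (by linarith)
    have hqs : q * L * Real.cosh t = Real.sinh t := by
      rw [hqdef]; field_simp
    have hsq : 1 - x ^ 2 * Real.cosh t ^ 2 = (Real.cosh t * L * r) ^ 2 := by
      have hcs := Real.cosh_sq_sub_sinh_sq t
      linear_combination (-(Real.cosh t ^ 2 * L ^ 2)) * hr2 +
        (q * L * Real.cosh t + Real.sinh t) * hqs + (-(Real.cosh t ^ 2)) * hL2 + (-1) * hcs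
    have hsqrt : Real.sqrt (1 - x ^ 2 * Real.cosh t ^ 2) = Real.cosh t * L * r := by
      rw [hsq]; exact Real.sqrt_sq (by positivity)
    have hgf : g (f t) = Real.cosh t := by
      rw [hgdef]
      simp only
      rw [hsin]
      have : 1 - (1 - x ^ 2) * q ^ 2 = (1 / Real.cosh t) ^ 2 := by
        have hcs := Real.cosh_sq_sub_sinh_sq t
        have hc' : Real.cosh t ≠ 0 := ne_of_gt hc
        have hLq : L * q = Real.sinh t / Real.cosh t := by rw [hqdef]; field_simp
        rw [← hL2, ← mul_pow, hLq]
        field_simp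
        linarith
      rw [this, Real.sqrt_sq (by positivity)]
      field_simp
    rw [hgf, hsqrt]
    field_simp
  -- facts about T = arcosh (1/y)
  set T : ℝ := arcosh (1 / y) with hTdef
  have hyi : 1 ≤ 1 / y := (le_div_iff₀ hy0).2 (by linarith)
  obtain ⟨hcoshT, hsinhT, hT0⟩ := arcosh_facts hyi
  have hsinhT' : Real.sinh T = Real.sqrt (1 - y ^ 2) / y := by
    rw [hsinhT]
    rw [show (1 / y) ^ 2 - 1 = (1 - y ^ 2) / y ^ 2 by
      field_simp]
    rw [Real.sqrt_div (by nlinarith : (0:ℝ) ≤ 1 - y ^ 2), Real.sqrt_sq hy0.le]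
  have htanhT : Real.sinh T / Real.cosh T = Real.sqrt (1 - y ^ 2) := by
    rw [hsinhT', hcoshT]; field_simp
  -- s = sin of the angle f T
  set s : ℝ := Real.sqrt (1 - y ^ 2) / L with hsdef
  have hs0 : 0 ≤ s := by positivity
  have hs1 : s ≤ 1 := by
    rw [div_le_one hL0]
    exact Real.sqrt_le_sqrt (by nlinarith)
  have hfT : f T = Real.arcsin s := by rw [hfdef]; simp only; rw [htanhT]
  -- strict bound on Ioo 0 T
  have htanh_lt : ∀ t ∈ Set.Ioo (0:ℝ) T, 0 ≤ Real.sinh t / Real.cosh t ∧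
      Real.sinh t / Real.cosh t < L := by
    intro t ht
    have hc := Real.cosh_pos t
    have hcT := Real.cosh_pos T
    have hs_pos : 0 < Real.sinh t := Real.sinh_pos_iff.2 ht.1
    constructor
    · positivity
    · have h1 : Real.sinh t / Real.cosh t < Real.sinh T / Real.cosh T := by
        rw [div_lt_div_iff₀ hc hcT]
        have h2 : Real.sinh (t - T) < 0 := Real.sinh_neg_iff.2 (by linarith [ht.2])
        rw [Real.sinh_sub] at h2
        linarith
      calc Real.sinh t / Real.cosh t < Real.sinh T / Real.cosh T := h1
        _ = Real.sqrt (1 - y ^ 2) := htanhT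
        _ ≤ L := by apply Real.sqrt_le_sqrt; nlinarith
  -- the value of the LHS integral
  have hF_cont : Continuous (fun t => G (f t)) := hG_cont.comp hf_cont
  have hderiv : ∀ t ∈ Set.Ioo (0:ℝ) T, HasDerivAt (fun t => G (f t))
      (1 / Real.sqrt (1 - x ^ 2 * Real.cosh t ^ 2)) t := by
    intro t ht
    obtain ⟨h1, h2⟩ := htanh_lt t ht
    exact key t h1 h2
  have h_integrable : IntervalIntegrable
      (fun t => 1 / Real.sqrt (1 - x ^ 2 * Real.cosh t ^ 2)) MeasureTheory.volume 0 T := by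
    apply intervalIntegral.intervalIntegrable_deriv_of_nonneg (hF_cont.continuousOn)
    · intro t ht
      rw [min_eq_left hT0, max_eq_right hT0] at ht
      exact hderiv t ht
    · intro t _
      positivity
  have h_eq : (∫ t in (0:ℝ)..T, 1 / Real.sqrt (1 - x ^ 2 * Real.cosh t ^ 2))
      = G (Real.arcsin s) := by
    rw [intervalIntegral.integral_eq_sub_of_hasDeriv_right_of_le hT0 hF_cont.continuousOn
      (fun t ht => (hderiv t ht).hasDerivWithinAt) h_integrable]
    have hf0 : f 0 = 0 := by
      rw [hfdef]; simp [Real.sinh_zero]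
    rw [hfT, hf0]
    simp only [hGdef, intervalIntegral.integral_same, sub_zero]
  -- split the RHS integral
  have harcsin_le : Real.arcsin s ≤ Real.pi / 2 := Real.arcsin_le_pi_div_two s
  have hsplit : G (Real.pi / 2) = G (Real.arcsin s) +
      ∫ θ in Real.arcsin s..(Real.pi / 2), g θ := by
    rw [hGdef]
    simp only
    rw [intervalIntegral.integral_add_adjacent_intervals (hg_cont.intervalIntegrable _ _)
      (hg_cont.intervalIntegrable _ _)]
  have htail_nonneg : (0:ℝ) ≤ ∫ θ in Real.arcsin s..(Real.pi / 2), g θ :=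
    intervalIntegral.integral_nonneg harcsin_le (fun θ _ => hg_nonneg θ)
  have htail_ge : Real.pi / 2 - Real.arcsin s ≤ ∫ θ in Real.arcsin s..(Real.pi / 2), g θ := by
    calc Real.pi / 2 - Real.arcsin s = ∫ _ in Real.arcsin s..(Real.pi / 2), (1:ℝ) := by
          simp
      _ ≤ ∫ θ in Real.arcsin s..(Real.pi / 2), g θ := by
          apply intervalIntegral.integral_mono_on harcsin_le
            (intervalIntegrable_const) (hg_cont.intervalIntegrable _ _)
          intro θ _
          exact hg_ge_one θ
  constructor
  · rw [h_eq]
    show G (Real.arcsin s) ≤ G (Real.pi / 2)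
    rw [hsplit]; linarith
  · constructor
    · intro heq
      by_contra hne
      have hxy' : x < y := lt_of_le_of_ne hxy hne
      have hs1' : s < 1 := by
        rw [div_lt_one hL0]
        exact Real.sqrt_lt_sqrt (by nlinarith) (by nlinarith)
      have ha : Real.arcsin s < Real.pi / 2 := Real.arcsin_lt_pi_div_two.2 hs1'
      rw [h_eq] at heq
      have : G (Real.pi / 2) = G (Real.arcsin s) := heq.symm
      rw [hsplit] at this
      linarith
    · intro heq
      subst heq
      have hs_eq : s = 1 := by
        rw [hsdef, hLdef]; field_simp; exact div_self (ne_of_gt hL0)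
      rw [h_eq, hs_eq, Real.arcsin_one]
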